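/- Data-processing inequality: let ρ be a state and σ a positive definite matrix on ℂ^d, let ε ∈ (0,1), and let Λ be a CPTP map in Kraus form from d×d matrices to d'×d' matrices. Then D̲_s^ε(Λ(ρ)‖Λ(σ)) ≤ D̲_s^ε(ρ‖σ) and D̄_s^ε(Λ(ρ)‖Λ(σ)) ≤ D̄_s^ε(ρ‖σ), where in case Λ(σ) is singular each defining supremum/infimum is taken in the extended reals. -/

import Mathlib

open Matrix
open scoped ComplexOrder

noncomputable section

/-- Positive part `C₊` of a Hermitian matrix, obtained by applying `x ↦ max x 0` to the
eigenvalues in a spectral decomposition (junk value `0` for non-Hermitian input). -/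
def matPos {n : Type*} [Fintype n] [DecidableEq n] (A : Matrix n n ℂ) : Matrix n n ℂ :=
  if hA : A.IsHermitian then
    (hA.eigenvectorUnitary : Matrix n n ℂ) *
      Matrix.diagonal (fun i => ((max (hA.eigenvalues i) 0 : ℝ) : ℂ)) *
      star (hA.eigenvectorUnitary : Matrix n n ℂ)
  else 0

/-- `Tr C₊` as a real number. -/
def trPos {n : Type*} [Fintype n] [DecidableEq n] (A : Matrix n n ℂ) : ℝ :=
  (matPos A).trace.re

/-- Spectral projection of a Hermitian matrix onto `[0, ∞)` (junk value `0` for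
non-Hermitian input). -/
def projNonneg {n : Type*} [Fintype n] [DecidableEq n] (A : Matrix n n ℂ) : Matrix n n ℂ :=
  if hA : A.IsHermitian then
    (hA.eigenvectorUnitary : Matrix n n ℂ) *
      Matrix.diagonal (fun i => if 0 ≤ hA.eigenvalues i then (1 : ℂ) else 0) *
      star (hA.eigenvectorUnitary : Matrix n n ℂ)
  else 0

/-- The information spectrum relative entropy `D̲_s^ε(ρ‖σ)`, with the supremum taken in the
extended reals. -/
def DlowE {n : Type*} [Fintype n] [DecidableEq n] (ε : ℝ) (ρ σ : Matrix n n ℂ) : EReal :=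
  sSup (Real.toEReal '' {γ : ℝ | 1 - ε ≤ trPos (ρ - (2 : ℝ) ^ γ • σ)})

/-- The information spectrum relative entropy `D̄_s^ε(ρ‖σ)`, with the infimum taken in the
extended reals. -/
def DhighE {n : Type*} [Fintype n] [DecidableEq n] (ε : ℝ) (ρ σ : Matrix n n ℂ) : EReal :=
  sInf (Real.toEReal '' {γ : ℝ | trPos (ρ - (2 : ℝ) ^ γ • σ) ≤ ε})


section Aux
set_option linter.unusedSectionVars false
variable {n : Type*} [Fintype n] [DecidableEq n]


variable {n : Type*} [Fintype n] [DecidableEq n]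

lemma psd_trace_nonneg {P : Matrix n n ℂ} (hP : P.PosSemidef) : 0 ≤ P.trace := by
  rw [Matrix.trace]
  apply Finset.sum_nonneg
  intro i _
  have := hP.dotProduct_mulVec_nonneg (Pi.single i 1)
  simpa [Matrix.mulVec, dotProduct, Pi.single_apply, Matrix.diag] using this

lemma trace_mul_psd_nonneg {P Q : Matrix n n ℂ} (hP : P.PosSemidef) (hQ : Q.PosSemidef) :
    0 ≤ (P * Q).trace := by
  obtain ⟨C, rfl⟩ : ∃ C : Matrix n n ℂ, Q = Cᴴ * C := by
    open scoped MatrixOrder in exact CStarAlgebra.nonneg_iff_eq_star_mul_self.mp hQ.nonneg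
  have h1 : (P * (Cᴴ * C)).trace = (C * P * Cᴴ).trace := by
    rw [← Matrix.mul_assoc, Matrix.trace_mul_cycle]
  rw [h1]
  exact psd_trace_nonneg (hP.mul_mul_conjTranspose_same C)


lemma rcCoe (r : ℝ) : (RCLike.ofReal r : ℂ) = Complex.ofReal r := rfl

lemma sandwich_psd {A : Matrix n n ℂ} (hA : A.IsHermitian) (f : n → ℂ) (hf : ∀ i, 0 ≤ f i) :
    ((hA.eigenvectorUnitary : Matrix n n ℂ) * Matrix.diagonal f *
      star (hA.eigenvectorUnitary : Matrix n n ℂ)).PosSemidef := by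
  rw [Matrix.star_eq_conjTranspose]
  exact (Matrix.posSemidef_diagonal_iff.mpr hf).mul_mul_conjTranspose_same _

lemma matPos_psd {A : Matrix n n ℂ} (hA : A.IsHermitian) : (matPos A).PosSemidef := by
  rw [matPos, dif_pos hA]
  exact sandwich_psd hA _ (fun i => by
    rw [Complex.zero_le_real]; exact le_max_right _ _)

lemma matPos_sub_psd {A : Matrix n n ℂ} (hA : A.IsHermitian) : (matPos A - A).PosSemidef := by
  rw [matPos, dif_pos hA]
  have hsp := hA.spectral_theorem
  set U : Matrix n n ℂ := (hA.eigenvectorUnitary : Matrix n n ℂ) with hUdef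
  set ev := hA.eigenvalues with hevdef
  rw [Unitary.conjStarAlgAut_apply, ← hUdef] at hsp
  rw [hsp, ← Matrix.sub_mul, ← Matrix.mul_sub, Matrix.diagonal_sub]
  exact sandwich_psd hA _ (fun i => by
    rw [sub_nonneg]
    simp only [Function.comp_apply, rcCoe]
    exact_mod_cast le_max_left (ev i) (0:ℝ))

lemma projNonneg_psd {A : Matrix n n ℂ} (hA : A.IsHermitian) : (projNonneg A).PosSemidef := by
  rw [projNonneg, dif_pos hA]
  exact sandwich_psd hA _ (fun i => by positivity)

lemma one_sub_projNonneg_psd {A : Matrix n n ℂ} (hA : A.IsHermitian) :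
    ((1 : Matrix n n ℂ) - projNonneg A).PosSemidef := by
  rw [projNonneg, dif_pos hA]
  have hU : (hA.eigenvectorUnitary : Matrix n n ℂ) * star (hA.eigenvectorUnitary : Matrix n n ℂ)
      = 1 := (Matrix.mem_unitaryGroup_iff).mp hA.eigenvectorUnitary.2
  have h1 : (1 : Matrix n n ℂ) = (hA.eigenvectorUnitary : Matrix n n ℂ) *
      Matrix.diagonal (fun _ => (1:ℂ)) * star (hA.eigenvectorUnitary : Matrix n n ℂ) := by
    rw [Matrix.diagonal_one, Matrix.mul_one, hU]
  rw [h1, ← Matrix.sub_mul, ← Matrix.mul_sub, Matrix.diagonal_sub]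
  exact sandwich_psd hA _ (fun i => by
    by_cases h : 0 ≤ hA.eigenvalues i <;> simp [h])

lemma projNonneg_mul {A : Matrix n n ℂ} (hA : A.IsHermitian) :
    projNonneg A * A = matPos A := by
  rw [projNonneg, matPos, dif_pos hA, dif_pos hA]
  have hsp := hA.spectral_theorem
  set U : Matrix n n ℂ := (hA.eigenvectorUnitary : Matrix n n ℂ) with hUdef
  set ev := hA.eigenvalues with hevdef
  rw [Unitary.conjStarAlgAut_apply, ← hUdef] at hsp
  nth_rewrite 1 [hsp]
  have hU : star (hA.eigenvectorUnitary : Matrix n n ℂ) * (hA.eigenvectorUnitary : Matrix n n ℂ)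
      = 1 := (Matrix.mem_unitaryGroup_iff').mp hA.eigenvectorUnitary.2
  rw [Matrix.mul_assoc, Matrix.mul_assoc, ← Matrix.mul_assoc (star _), ← Matrix.mul_assoc (star _),
    hU, Matrix.one_mul, ← Matrix.mul_assoc, ← Matrix.mul_assoc, Matrix.mul_assoc U,
    Matrix.diagonal_mul_diagonal]
  have hD : (fun i => (if 0 ≤ ev i then (1:ℂ) else 0) * (RCLike.ofReal ∘ ev) i)
      = fun i => ((max (ev i) 0 : ℝ) : ℂ) := by
    funext i
    by_cases h : 0 ≤ ev i
    · rw [if_pos h, one_mul, max_eq_left h, Function.comp_apply, rcCoe]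
    · rw [if_neg h, zero_mul, max_eq_right (le_of_not_ge h)]
      simp
  rw [hD]

lemma sum_psd {ι : Type} [Fintype ι] (f : ι → Matrix n n ℂ) (hf : ∀ i, (f i).PosSemidef) :
    (∑ i, f i).PosSemidef := by
  classical
  refine Finset.sum_induction f _ (fun a b ha hb => ha.add hb) Matrix.PosSemidef.zero
    (fun i _ => hf i)

lemma lambda_isHermitian {d d' : ℕ} {ι : Type} [Fintype ι] {A : Matrix (Fin d) (Fin d) ℂ}
    (hA : A.IsHermitian) (K : ι → Matrix (Fin d') (Fin d) ℂ) :
    (∑ i, K i * A * (K i)ᴴ).IsHermitian := by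
  unfold Matrix.IsHermitian
  rw [Matrix.conjTranspose_sum]
  congr 1
  funext i
  simp [Matrix.conjTranspose_mul, Matrix.mul_assoc, hA.eq]

lemma trPos_lambda_le {d d' : ℕ} {ι : Type} [Fintype ι] {A : Matrix (Fin d) (Fin d) ℂ}
    (hA : A.IsHermitian) (K : ι → Matrix (Fin d') (Fin d) ℂ)
    (hK : ∑ i, (K i)ᴴ * K i = (1 : Matrix (Fin d) (Fin d) ℂ)) :
    trPos (∑ i, K i * A * (K i)ᴴ) ≤ trPos A := by
  set B := ∑ i, K i * A * (K i)ᴴ with hBdef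
  have hB : B.IsHermitian := lambda_isHermitian hA K
  set Q := projNonneg B with hQdef
  set M := ∑ i, (K i)ᴴ * Q * K i with hMdef
  have hQ : Q.PosSemidef := projNonneg_psd hB
  have h1Q : ((1 : Matrix (Fin d') (Fin d') ℂ) - Q).PosSemidef := one_sub_projNonneg_psd hB
  have hM : M.PosSemidef := sum_psd _ (fun i => hQ.conjTranspose_mul_mul_same (K i))
  have h1M : ((1 : Matrix (Fin d) (Fin d) ℂ) - M).PosSemidef := by
    have : (1 : Matrix (Fin d) (Fin d) ℂ) - M = ∑ i, (K i)ᴴ * (1 - Q) * K i := by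
      rw [hMdef, ← hK, ← Finset.sum_sub_distrib]
      congr 1; funext i
      rw [Matrix.mul_sub, Matrix.sub_mul, Matrix.mul_one]
    rw [this]
    exact sum_psd _ (fun i => h1Q.conjTranspose_mul_mul_same (K i))
  -- trace identity
  have htr : (matPos B).trace = (M * A).trace := by
    rw [← projNonneg_mul hB, ← hQdef, hBdef, hMdef, Matrix.mul_sum, Matrix.sum_mul,
      Matrix.trace_sum, Matrix.trace_sum]
    congr 1; funext i
    rw [← Matrix.mul_assoc, ← Matrix.mul_assoc,
      Matrix.mul_assoc (Q * K i) A ((K i)ᴴ), Matrix.trace_mul_comm (Q * K i) (A * (K i)ᴴ),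
      Matrix.trace_mul_comm ((K i)ᴴ * Q * K i) A,
      ← Matrix.mul_assoc A ((K i)ᴴ * Q) (K i), ← Matrix.mul_assoc A ((K i)ᴴ) Q,
      Matrix.mul_assoc (A * (K i)ᴴ) Q (K i)]
  have hsplit : (M * A).trace = (M * matPos A).trace - (M * (matPos A - A)).trace := by
    rw [← Matrix.trace_sub, ← Matrix.mul_sub, sub_sub_cancel]
  have r1 : 0 ≤ ((M * (matPos A - A)).trace).re :=
    (Complex.le_def.mp (trace_mul_psd_nonneg hM (matPos_sub_psd hA))).1
  have r2 : ((M * matPos A).trace).re ≤ ((matPos A).trace).re := by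
    have h := (Complex.le_def.mp (trace_mul_psd_nonneg h1M (matPos_psd hA))).1
    rw [Matrix.sub_mul, Matrix.one_mul, Matrix.trace_sub, Complex.sub_re, Complex.zero_re] at h
    linarith
  have : trPos B = ((M * matPos A).trace).re - ((M * (matPos A - A)).trace).re := by
    rw [trPos, htr, hsplit, Complex.sub_re]
  rw [this]
  unfold trPos
  linarith

end Aux

/-- Data-processing inequality for the information spectrum relative entropies: for a CPTP map
`Λ` in Kraus form, `D̲_s^ε(Λ(ρ)‖Λ(σ)) ≤ D̲_s^ε(ρ‖σ)` and `D̄_s^ε(Λ(ρ)‖Λ(σ)) ≤ D̄_s^ε(ρ‖σ)`. -/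
theorem Dlow_Dhigh_data_processing {d d' : ℕ} (ρ σ : Matrix (Fin d) (Fin d) ℂ)
    (hρ : ρ.PosSemidef) (hρtr : ρ.trace = 1) (hσ : σ.PosDef)
    (ε : ℝ) (hε0 : 0 < ε) (hε1 : ε < 1)
    {ι : Type} [Fintype ι] (K : ι → Matrix (Fin d') (Fin d) ℂ)
    (hK : ∑ i, (K i)ᴴ * K i = (1 : Matrix (Fin d) (Fin d) ℂ)) :
    DlowE ε (∑ i, K i * ρ * (K i)ᴴ) (∑ i, K i * σ * (K i)ᴴ) ≤ DlowE ε ρ σ ∧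
      DhighE ε (∑ i, K i * ρ * (K i)ᴴ) (∑ i, K i * σ * (K i)ᴴ) ≤ DhighE ε ρ σ := by
  have herm : ∀ γ : ℝ, (ρ - (2:ℝ)^γ • σ).IsHermitian := fun γ => by
    unfold Matrix.IsHermitian
    rw [Matrix.conjTranspose_sub, Matrix.conjTranspose_smul, star_trivial, hρ.1.eq, hσ.1.eq]
  have hmap : ∀ γ : ℝ, (∑ i, K i * ρ * (K i)ᴴ) - (2:ℝ)^γ • (∑ i, K i * σ * (K i)ᴴ)
      = ∑ i, K i * (ρ - (2:ℝ)^γ • σ) * (K i)ᴴ := fun γ => by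
    rw [Finset.smul_sum, ← Finset.sum_sub_distrib]
    congr 1; funext i
    rw [Matrix.mul_sub, Matrix.sub_mul, Matrix.mul_smul, Matrix.smul_mul]
  have hkey : ∀ γ : ℝ, trPos ((∑ i, K i * ρ * (K i)ᴴ) - (2:ℝ)^γ • ∑ i, K i * σ * (K i)ᴴ)
      ≤ trPos (ρ - (2:ℝ)^γ • σ) := fun γ => by
    rw [hmap γ]; exact trPos_lambda_le (herm γ) K hK
  constructor
  · exact sSup_le_sSup (Set.image_mono (fun γ hγ => le_trans hγ (hkey γ)))
  · exact sInf_le_sInf (Set.image_mono (fun γ hγ => le_trans (hkey γ) hγ))
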